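/- Let f ∈ ℝ[X₁,…,Xₙ]. Suppose that for every x in the simplex Δ there exist m ∈ ℕ, homogeneous polynomials g₁,…,g_m ∈ ℝ[X₁,…,Xₙ] and polynomials h₁,…,h_m with only nonnegative coefficients such that f = g₁h₁ + ⋯ + g_m h_m and gᵢ(x) > 0 for all i. Then there exists k ∈ ℕ such that (X₁+⋯+Xₙ)^k · f has only nonnegative coefficients. -/

import Mathlib

open MvPolynomial Finset

namespace PolyaLG

variable {n : ℕ}




/-- Product of falling factorials. -/
noncomputable def FF (α β : Fin n →₀ ℕ) : ℝ := ∏ i, ((α i).descFactorial (β i) : ℝ)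

lemma FF_nonneg (α β : Fin n →₀ ℕ) : 0 ≤ FF α β :=
  Finset.prod_nonneg fun _ _ => Nat.cast_nonneg _

lemma FF_add (α β γ : Fin n →₀ ℕ) : FF α (γ + β) = FF α β * FF (α - β) γ := by
  rw [FF, FF, FF, ← Finset.prod_mul_distrib]
  refine Finset.prod_congr rfl fun i _ => ?_
  rw [Finsupp.add_apply, Finsupp.tsub_apply, ← Nat.cast_mul]
  congr 1
  have h := Nat.descFactorial_mul_descFactorial
    (n := α i) (k := β i) (m := γ i + β i) (Nat.le_add_left _ _)
  rw [Nat.add_sub_cancel] at h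
  rw [← h, Nat.mul_comm]

/-- The linear functional `T`. -/
noncomputable def T (g : MvPolynomial (Fin n) ℝ) (α : Fin n →₀ ℕ) : ℝ :=
  ∑ β ∈ g.support, g.coeff β * FF α β

lemma T_eq_sum {g : MvPolynomial (Fin n) ℝ} {S : Finset (Fin n →₀ ℕ)} (hS : g.support ⊆ S)
    (α : Fin n →₀ ℕ) : T g α = ∑ β ∈ S, g.coeff β * FF α β := by
  rw [T]
  refine Finset.sum_subset hS fun β _ hβ => ?_
  rw [notMem_support_iff] at hβ
  rw [hβ, zero_mul]

lemma T_sum {ι : Type*} [DecidableEq ι] (s : Finset ι) (p : ι → MvPolynomial (Fin n) ℝ)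
    (α : Fin n →₀ ℕ) : T (∑ i ∈ s, p i) α = ∑ i ∈ s, T (p i) α := by
  classical
  set S : Finset (Fin n →₀ ℕ) := s.biUnion fun i => (p i).support with hSdef
  have h1 : (∑ i ∈ s, p i).support ⊆ S := MvPolynomial.support_sum
  rw [T_eq_sum h1]
  have h2 : ∀ i ∈ s, T (p i) α = ∑ β ∈ S, (p i).coeff β * FF α β := fun i hi =>
    T_eq_sum (Finset.subset_biUnion_of_mem (fun j => (p j).support) hi) α
  rw [Finset.sum_congr rfl h2, Finset.sum_comm]
  refine Finset.sum_congr rfl fun β _ => ?_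
  rw [← Finset.sum_mul, ← MvPolynomial.coeff_sum]

lemma T_mul_monomial (p : MvPolynomial (Fin n) ℝ) (β : Fin n →₀ ℕ) (c : ℝ)
    (α : Fin n →₀ ℕ) :
    T (p * monomial β c) α = c * FF α β * T p (α - β) := by
  classical
  have hsupp : (p * monomial β c).support ⊆ p.support.map (addRightEmbedding β) := by
    intro γ hγ
    rw [mem_support_iff, coeff_mul_monomial'] at hγ
    by_cases h : β ≤ γ
    · simp only [h, if_true] at hγ
      rw [Finset.mem_map]
      refine ⟨γ - β, ?_, ?_⟩
      · rw [mem_support_iff]; intro hz; rw [hz, zero_mul] at hγ; exact hγ rfl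
      · rw [addRightEmbedding_apply]; exact tsub_add_cancel_of_le h
    · simp only [h, if_false] at hγ; exact absurd rfl hγ
  rw [T_eq_sum hsupp, Finset.sum_map]
  rw [T, Finset.mul_sum]
  refine Finset.sum_congr rfl fun γ hγ => ?_
  rw [addRightEmbedding_apply, coeff_mul_monomial, FF_add]
  ring

lemma T_mul (p h : MvPolynomial (Fin n) ℝ) (α : Fin n →₀ ℕ) :
    T (p * h) α = ∑ β ∈ h.support, h.coeff β * (FF α β * T p (α - β)) := by
  classical
  conv_lhs => rw [h.as_sum, Finset.mul_sum, T_sum]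
  refine Finset.sum_congr rfl fun β _ => ?_
  rw [T_mul_monomial]; ring

lemma degree_univ (γ : Fin n →₀ ℕ) : γ.degree = ∑ i, γ i := by
  rw [Finsupp.degree]
  exact Finset.sum_subset (Finset.subset_univ _)
    (fun i _ hi => Finsupp.notMem_support_iff.1 hi)

lemma sum_X_isHomogeneous :
    ((∑ i, X i : MvPolynomial (Fin n) ℝ)).IsHomogeneous 1 :=
  IsHomogeneous.sum _ _ _ fun i _ => isHomogeneous_X _ _

lemma pow_mul_isHomogeneous {g : MvPolynomial (Fin n) ℝ} {d : ℕ} (hg : g.IsHomogeneous d)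
    (k : ℕ) : ((∑ i, X i : MvPolynomial (Fin n) ℝ) ^ k * g).IsHomogeneous (k + d) := by
  have h := (sum_X_isHomogeneous.pow k).mul hg
  rwa [one_mul] at h

lemma coeff_homog_zero {g : MvPolynomial (Fin n) ℝ} {d : ℕ} (hg : g.IsHomogeneous d)
    (k : ℕ) (γ : Fin n →₀ ℕ) (h : ∑ i, γ i ≠ k + d) :
    coeff γ ((∑ i, X i : MvPolynomial (Fin n) ℝ) ^ k * g) = 0 :=
  (pow_mul_isHomogeneous hg k).coeff_eq_zero (by rwa [degree_univ])





lemma prod_X_pow_univ (c : Fin n → ℕ) :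
    (∏ i, (X i : MvPolynomial (Fin n) ℝ) ^ c i)
      = monomial (Finsupp.equivFunOnFinite.symm c) 1 := by
  rw [← MvPolynomial.prod_X_pow_eq_monomial]
  refine (Finset.prod_subset (Finset.subset_univ (Finsupp.equivFunOnFinite.symm c).support)
      (fun i _ hi => by
        rw [Finsupp.notMem_support_iff] at hi
        simp only [Finsupp.coe_equivFunOnFinite_symm] at hi
        rw [hi, pow_zero])).symm.trans ?_
  refine Finset.prod_congr rfl fun i _ => ?_
  simp only [Finsupp.coe_equivFunOnFinite_symm]

lemma coeff_sum_X_pow (k : ℕ) (δ : Fin n →₀ ℕ) :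
    coeff δ ((∑ i, X i : MvPolynomial (Fin n) ℝ) ^ k)
      = if ∑ i, δ i = k then (Nat.multinomial Finset.univ δ : ℝ) else 0 := by
  classical
  rw [Finset.sum_pow_eq_sum_piAntidiag, MvPolynomial.coeff_sum]
  have hterm : ∀ c ∈ Finset.piAntidiag Finset.univ k,
      coeff δ ((Nat.multinomial Finset.univ c : MvPolynomial (Fin n) ℝ)
        * ∏ i, (X i : MvPolynomial (Fin n) ℝ) ^ c i)
      = if c = ⇑δ then (Nat.multinomial Finset.univ c : ℝ) else 0 := by
    intro c _
    rw [prod_X_pow_univ, ← MvPolynomial.C_eq_coe_nat, MvPolynomial.coeff_C_mul,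
      MvPolynomial.coeff_monomial]
    have hiff : (Finsupp.equivFunOnFinite.symm c = δ) ↔ (c = ⇑δ) := by
      rw [Equiv.symm_apply_eq]; exact Iff.rfl
    by_cases h : c = ⇑δ
    · rw [if_pos (hiff.mpr h), if_pos h, mul_one]
    · rw [if_neg (fun hh => h (hiff.mp hh)), if_neg h, mul_zero]
  rw [Finset.sum_congr rfl hterm,
    Finset.sum_ite_eq' (Finset.piAntidiag Finset.univ k) (⇑δ)
      (fun c => (Nat.multinomial Finset.univ c : ℝ))]
  have hmem : (⇑δ ∈ Finset.piAntidiag Finset.univ k) ↔ (∑ i, δ i = k) := by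
    rw [Finset.mem_piAntidiag]
    simp
  by_cases h : ∑ i, δ i = k
  · rw [if_pos (hmem.mpr h), if_pos h]
  · rw [if_neg (fun hh => h (hmem.mp hh)), if_neg h]


lemma key_coeff_monomial (β : Fin n →₀ ℕ) (c : ℝ) (k d : ℕ) (hβ : ∑ i, β i = d)
    (γ : Fin n →₀ ℕ) (hγ : ∑ i, γ i = k + d) :
    (∏ i, ((γ i).factorial : ℝ)) * coeff γ ((∑ i, X i : MvPolynomial (Fin n) ℝ) ^ k * monomial β c)
      = (k.factorial : ℝ) * (c * FF γ β) := by
  classical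
  rw [coeff_mul_monomial']
  by_cases h : β ≤ γ
  · rw [if_pos h]
    have hcoord : ∀ i, β i ≤ γ i := fun i => Finsupp.le_def.mp h i
    have hsub : ∀ i, (γ - β) i = γ i - β i := fun i => Finsupp.tsub_apply γ β i
    have hsum : ∑ i, (γ - β) i = k := by
      have h1 : (∑ i, (γ - β) i) + ∑ i, β i = ∑ i, γ i := by
        rw [← Finset.sum_add_distrib]
        refine Finset.sum_congr rfl fun i _ => ?_
        have := hcoord i
        rw [hsub i]; omega
      omega
    rw [coeff_sum_X_pow, if_pos hsum]
    have hnat : (∏ i, (γ i).factorial) * Nat.multinomial Finset.univ ⇑(γ - β)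
        = k.factorial * ∏ i, (γ i).descFactorial (β i) := by
      have hfac : ∀ i, (γ i).factorial = (γ i - β i).factorial * (γ i).descFactorial (β i) :=
        fun i => (Nat.factorial_mul_descFactorial (hcoord i)).symm
      calc (∏ i, (γ i).factorial) * Nat.multinomial Finset.univ ⇑(γ - β)
          = ((∏ i, ((γ - β) i).factorial) * ∏ i, (γ i).descFactorial (β i))
              * Nat.multinomial Finset.univ ⇑(γ - β) := by
            rw [← Finset.prod_mul_distrib]
            congr 1
            refine Finset.prod_congr rfl fun i _ => ?_
            rw [hsub i]; exact hfac i
        _ = ((∏ i, ((γ - β) i).factorial) * Nat.multinomial Finset.univ ⇑(γ - β))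
              * ∏ i, (γ i).descFactorial (β i) := by ring
        _ = k.factorial * ∏ i, (γ i).descFactorial (β i) := by
            rw [Nat.multinomial_spec, hsum]
    have hr := congrArg (fun m : ℕ => (m : ℝ)) hnat
    push_cast at hr
    rw [FF]
    simp only [Finsupp.coe_tsub]
    linear_combination c * hr
  · rw [if_neg h]
    obtain ⟨i, hi⟩ : ∃ i, γ i < β i := by
      by_contra hc
      push_neg at hc
      exact h (Finsupp.le_def.mpr fun i => hc i)
    have hFF : FF γ β = 0 := by
      rw [FF]
      refine Finset.prod_eq_zero (Finset.mem_univ i) ?_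
      rw [Nat.cast_eq_zero]
      exact Nat.descFactorial_eq_zero_iff_lt.mpr hi
    rw [hFF]; ring

lemma key_coeff (g : MvPolynomial (Fin n) ℝ) {d : ℕ} (hg : g.IsHomogeneous d) (k : ℕ)
    (γ : Fin n →₀ ℕ) (hγ : ∑ i, γ i = k + d) :
    (∏ i, ((γ i).factorial : ℝ)) * coeff γ ((∑ i, X i : MvPolynomial (Fin n) ℝ) ^ k * g)
      = (k.factorial : ℝ) * T g γ := by
  classical
  conv_lhs => rw [g.as_sum, Finset.mul_sum, MvPolynomial.coeff_sum]
  rw [Finset.mul_sum, T, Finset.mul_sum]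
  refine Finset.sum_congr rfl fun β hβ => ?_
  have hdeg : ∑ i, β i = d := by
    rw [← degree_univ]
    by_contra hne
    exact (mem_support_iff.mp hβ) (hg.coeff_eq_zero hne)
  exact key_coeff_monomial β _ k d hdeg γ hγ

lemma coeff_mul_eq_zero_of_lt (p : MvPolynomial (Fin n) ℝ) (k : ℕ) (α : Fin n →₀ ℕ)
    (h : ∑ i, α i < k) :
    coeff α ((∑ i, X i : MvPolynomial (Fin n) ℝ) ^ k * p) = 0 := by
  classical
  rw [MvPolynomial.coeff_mul]
  refine Finset.sum_eq_zero fun uv huv => ?_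
  rw [Finset.HasAntidiagonal.mem_antidiagonal] at huv
  have hle : ∑ i, uv.1 i ≤ ∑ i, α i := by
    refine Finset.sum_le_sum fun i _ => ?_
    have : uv.1 i + uv.2 i = α i := by rw [← Finsupp.add_apply, huv]
    omega
  rw [coeff_sum_X_pow, if_neg (by omega), zero_mul]


lemma abs_prod_sub_prod_le {ι : Type*} (s : Finset ι) (a b : ι → ℝ)
    (ha : ∀ i ∈ s, |a i| ≤ 1) (hb : ∀ i ∈ s, |b i| ≤ 1) :
    |(∏ i ∈ s, a i) - ∏ i ∈ s, b i| ≤ ∑ i ∈ s, |a i - b i| := by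
  classical
  induction s using Finset.cons_induction with
  | empty => simp
  | cons i s his ih =>
    rw [Finset.prod_cons, Finset.prod_cons, Finset.sum_cons]
    have hpa : |∏ j ∈ s, a j| ≤ 1 := by
      rw [Finset.abs_prod]
      exact Finset.prod_le_one (fun j _ => abs_nonneg _)
        (fun j hj => ha j (Finset.mem_cons_of_mem hj))
    have hbi : |b i| ≤ 1 := hb i (Finset.mem_cons_self _ _)
    have ihs := ih (fun j hj => ha j (Finset.mem_cons_of_mem hj))
      (fun j hj => hb j (Finset.mem_cons_of_mem hj))
    calc |a i * ∏ j ∈ s, a j - b i * ∏ j ∈ s, b j|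
        = |(a i - b i) * ∏ j ∈ s, a j + b i * ((∏ j ∈ s, a j) - ∏ j ∈ s, b j)| := by
          ring_nf
      _ ≤ |(a i - b i) * ∏ j ∈ s, a j| + |b i * ((∏ j ∈ s, a j) - ∏ j ∈ s, b j)| :=
          abs_add_le _ _
      _ = |a i - b i| * |∏ j ∈ s, a j| + |b i| * |(∏ j ∈ s, a j) - ∏ j ∈ s, b j| := by
          rw [abs_mul, abs_mul]
      _ ≤ |a i - b i| * 1 + 1 * ∑ j ∈ s, |a j - b j| := by
          have h1 : |a i - b i| * |∏ j ∈ s, a j| ≤ |a i - b i| * 1 :=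
            mul_le_mul_of_nonneg_left hpa (abs_nonneg _)
          have h2 : |b i| * |(∏ j ∈ s, a j) - ∏ j ∈ s, b j| ≤ 1 * ∑ j ∈ s, |a j - b j| :=
            mul_le_mul hbi ihs (abs_nonneg _) zero_le_one
          linarith
      _ = |a i - b i| + ∑ j ∈ s, |a j - b j| := by ring

lemma abs_pow_sub_pow_le (u v : ℝ) (hu : |u| ≤ 1) (hv : |v| ≤ 1) (m : ℕ) :
    |u ^ m - v ^ m| ≤ m * |u - v| := by
  have h := abs_prod_sub_prod_le (Finset.range m) (fun _ => u) (fun _ => v)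
    (fun _ _ => hu) (fun _ _ => hv)
  simpa using h

lemma cast_descFactorial (a b : ℕ) :
    ((a.descFactorial b : ℕ) : ℝ) = ∏ j ∈ Finset.range b, ((a : ℝ) - j) := by
  by_cases h : b ≤ a
  · rw [Nat.descFactorial_eq_prod_range]
    push_cast
    refine Finset.prod_congr rfl fun j hj => ?_
    rw [Finset.mem_range] at hj
    have : j ≤ a := by omega
    push_cast [Nat.cast_sub this]
    ring
  · push_neg at h
    rw [Nat.descFactorial_eq_zero_iff_lt.mpr h, Nat.cast_zero]
    refine (Finset.prod_eq_zero (Finset.mem_range.mpr h) ?_).symm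
    simp

lemma eval_lipschitz (g : MvPolynomial (Fin n) ℝ) (D : ℕ)
    (hD : ∀ β ∈ g.support, (∑ i, β i) ≤ D)
    (u v : Fin n → ℝ) (hu : ∀ i, u i ∈ Set.Icc (0:ℝ) 1) (hv : ∀ i, v i ∈ Set.Icc (0:ℝ) 1)
    (r : ℝ) (hr : ∀ i, |u i - v i| ≤ r) (hr0 : 0 ≤ r) :
    |eval u g - eval v g| ≤ (∑ β ∈ g.support, |g.coeff β|) * ((D : ℝ) * r) := by
  rw [eval_eq', eval_eq', ← Finset.sum_sub_distrib]
  have habs : ∀ (w : Fin n → ℝ), (∀ i, w i ∈ Set.Icc (0:ℝ) 1) → ∀ (i : Fin n) (m : ℕ),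
      |w i ^ m| ≤ 1 := by
    intro w hw i m
    rw [abs_pow]
    exact pow_le_one₀ (abs_nonneg _) (abs_le.mpr ⟨by linarith [(hw i).1], (hw i).2⟩)
  calc |∑ β ∈ g.support, (g.coeff β * ∏ i, u i ^ β i - g.coeff β * ∏ i, v i ^ β i)|
      ≤ ∑ β ∈ g.support, |g.coeff β * ∏ i, u i ^ β i - g.coeff β * ∏ i, v i ^ β i| :=
        Finset.abs_sum_le_sum_abs _ _
    _ ≤ ∑ β ∈ g.support, |g.coeff β| * ((D : ℝ) * r) := by
        refine Finset.sum_le_sum fun β hβ => ?_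
        rw [← mul_sub, abs_mul]
        refine mul_le_mul_of_nonneg_left ?_ (abs_nonneg _)
        calc |(∏ i, u i ^ β i) - ∏ i, v i ^ β i|
            ≤ ∑ i, |u i ^ β i - v i ^ β i| :=
              abs_prod_sub_prod_le _ _ _ (fun i _ => habs u hu i _) (fun i _ => habs v hv i _)
          _ ≤ ∑ i, (β i : ℝ) * |u i - v i| := by
              refine Finset.sum_le_sum fun i _ => ?_
              exact abs_pow_sub_pow_le _ _
                (abs_le.mpr ⟨by linarith [(hu i).1], (hu i).2⟩)
                (abs_le.mpr ⟨by linarith [(hv i).1], (hv i).2⟩) _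
          _ ≤ ∑ i, (β i : ℝ) * r := by
              refine Finset.sum_le_sum fun i _ => ?_
              exact mul_le_mul_of_nonneg_left (hr i) (Nat.cast_nonneg _)
          _ = (∑ i, (β i : ℝ)) * r := by rw [Finset.sum_mul]
          _ ≤ (D : ℝ) * r := by
              refine mul_le_mul_of_nonneg_right ?_ hr0
              rw [← Nat.cast_sum]
              exact_mod_cast hD β hβ
    _ = (∑ β ∈ g.support, |g.coeff β|) * ((D : ℝ) * r) := by rw [← Finset.sum_mul]


lemma support_deg_eq {g : MvPolynomial (Fin n) ℝ} {d : ℕ} (hg : g.IsHomogeneous d)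
    {β : Fin n →₀ ℕ} (hβ : β ∈ g.support) : ∑ i, β i = d := by
  rw [← degree_univ]
  by_contra hne
  exact (mem_support_iff.mp hβ) (hg.coeff_eq_zero hne)

lemma T_approx (g : MvPolynomial (Fin n) ℝ) {d : ℕ} (hg : g.IsHomogeneous d)
    (α : Fin n →₀ ℕ) (t : ℕ) (ht : (∑ i, α i) = t) (h1 : 1 ≤ t) (hdt : d ≤ t) :
    |T g α - (t:ℝ)^d * eval (fun i => (α i : ℝ)/(t:ℝ)) g|
      ≤ (∑ β ∈ g.support, |g.coeff β|) * ((d:ℝ)^2 / t) * (t:ℝ)^d := by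
  classical
  have ht0 : (0:ℝ) < t := by exact_mod_cast h1
  have hαle : ∀ i, α i ≤ t := fun i => ht ▸ Finset.single_le_sum
    (f := fun i => α i) (fun _ _ => Nat.zero_le _) (Finset.mem_univ i)
  set u : Fin n → ℝ := fun i => (α i : ℝ)/t with hudef
  have hu01 : ∀ i, u i ∈ Set.Icc (0:ℝ) 1 := fun i =>
    ⟨div_nonneg (Nat.cast_nonneg _) (le_of_lt ht0),
     (div_le_one ht0).mpr (by exact_mod_cast hαle i)⟩
  rw [eval_eq', T, Finset.mul_sum, ← Finset.sum_sub_distrib]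
  refine le_trans (Finset.abs_sum_le_sum_abs _ _) ?_
  rw [Finset.sum_mul, Finset.sum_mul]
  refine Finset.sum_le_sum fun β hβ => ?_
  have hβd : ∑ i, β i = d := support_deg_eq hg hβ
  have hβle : ∀ i, β i ≤ d := fun i => hβd ▸ Finset.single_le_sum
    (f := fun i => β i) (fun _ _ => Nat.zero_le _) (Finset.mem_univ i)
  have hfactor : g.coeff β * FF α β - (t:ℝ) ^ d * (g.coeff β * ∏ i, u i ^ β i)
      = g.coeff β * (FF α β - (t:ℝ)^d * ∏ i, u i ^ β i) := by ring
  rw [hfactor, abs_mul]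
  have hgoal : |g.coeff β| * ((d:ℝ)^2/(t:ℝ)) * (t:ℝ)^d
      = |g.coeff β| * (((d:ℝ)^2/(t:ℝ)) * (t:ℝ)^d) := by ring
  rw [hgoal]
  refine mul_le_mul_of_nonneg_left ?_ (abs_nonneg _)
  -- |FF α β - t^d * ∏ u^β| ≤ d^2/t * t^d
  have hFF : FF α β = (t:ℝ)^d * ∏ i, ∏ j ∈ Finset.range (β i), (((α i : ℝ) - j)/t) := by
    rw [FF]
    have htd : (t:ℝ)^d = ∏ i, (t:ℝ)^(β i) := by
      rw [Finset.prod_pow_eq_pow_sum, hβd]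
    rw [htd, ← Finset.prod_mul_distrib]
    refine Finset.prod_congr rfl fun i _ => ?_
    have hpc : (t:ℝ)^(β i) = ∏ _j ∈ Finset.range (β i), (t:ℝ) := by
      rw [Finset.prod_const, Finset.card_range]
    rw [cast_descFactorial, hpc, ← Finset.prod_mul_distrib]
    refine Finset.prod_congr rfl fun j _ => ?_
    field_simp
  have huprod : (∏ i, u i ^ β i) = ∏ i, ∏ j ∈ Finset.range (β i), u i := by
    refine Finset.prod_congr rfl fun i _ => ?_
    rw [Finset.prod_const, Finset.card_range]
  rw [hFF, huprod, ← mul_sub, abs_mul, abs_pow, abs_of_nonneg (le_of_lt ht0),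
    mul_comm (((d:ℝ)^2/(t:ℝ))) ((t:ℝ)^d)]
  refine mul_le_mul_of_nonneg_left ?_ (by positivity)
  -- |∏ A - ∏ B| ≤ d^2/t
  have hAle : ∀ i : Fin n, |∏ j ∈ Finset.range (β i), (((α i : ℝ) - j)/t)| ≤ 1 := by
    intro i
    rw [Finset.abs_prod]
    refine Finset.prod_le_one (fun j _ => abs_nonneg _) (fun j hj => ?_)
    rw [Finset.mem_range] at hj
    have hjd : (j:ℝ) ≤ t := by
      have : j ≤ t := by have := hβle i; omega
      exact_mod_cast this
    have hαi : (α i : ℝ) ≤ t := by exact_mod_cast hαle i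
    rw [abs_div, abs_of_nonneg (le_of_lt ht0), div_le_one ht0, abs_le]
    constructor <;> [linarith [Nat.cast_nonneg (α := ℝ) j, Nat.cast_nonneg (α := ℝ) (α i)];
      linarith [Nat.cast_nonneg (α := ℝ) j]]
  have hBle : ∀ i : Fin n, |u i| ≤ 1 := fun i =>
    abs_le.mpr ⟨by linarith [(hu01 i).1], (hu01 i).2⟩
  refine le_trans (abs_prod_sub_prod_le Finset.univ _ _
    (fun i _ => hAle i)
    (fun i _ => by
      rw [Finset.abs_prod]
      exact Finset.prod_le_one (fun j _ => abs_nonneg _) (fun j _ => hBle i))) ?_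
  have hinner : ∀ i : Fin n,
      |(∏ j ∈ Finset.range (β i), (((α i : ℝ) - j)/t)) - ∏ _j ∈ Finset.range (β i), u i|
        ≤ (β i : ℝ) * ((d:ℝ)/t) := by
    intro i
    refine le_trans (abs_prod_sub_prod_le (Finset.range (β i)) _ _
      (fun j hj => by
        rw [Finset.mem_range] at hj
        have hjd : (j:ℝ) ≤ t := by
          have : j ≤ t := by have := hβle i; omega
          exact_mod_cast this
        have hαi : (α i : ℝ) ≤ t := by exact_mod_cast hαle i
        rw [abs_div, abs_of_nonneg (le_of_lt ht0), div_le_one ht0, abs_le]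
        constructor <;> [linarith [Nat.cast_nonneg (α := ℝ) j, Nat.cast_nonneg (α := ℝ) (α i)];
          linarith [Nat.cast_nonneg (α := ℝ) j]])
      (fun j _ => hBle i)) ?_
    have : ∀ j ∈ Finset.range (β i), |((α i : ℝ) - j)/t - u i| ≤ (d:ℝ)/t := by
      intro j hj
      rw [Finset.mem_range] at hj
      have hjd : (j:ℝ) ≤ (d:ℝ) := by
        have : j ≤ d := by have := hβle i; omega
        exact_mod_cast this
      have : ((α i : ℝ) - j)/t - u i = -(j/t) := by
        rw [hudef]; field_simp; ring
      rw [this, abs_neg, abs_div, abs_of_nonneg (Nat.cast_nonneg _),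
        abs_of_nonneg (le_of_lt ht0)]
      gcongr
    refine le_trans (Finset.sum_le_sum this) ?_
    rw [Finset.sum_const, Finset.card_range, nsmul_eq_mul]
  refine le_trans (Finset.sum_le_sum (fun i _ => hinner i)) ?_
  rw [← Finset.sum_mul]
  have hsum : (∑ i, (β i : ℝ)) = (d:ℝ) := by
    rw [← Nat.cast_sum, hβd]
  rw [hsum]
  rw [pow_two]
  rw [mul_div_assoc]

lemma T_pos (g : MvPolynomial (Fin n) ℝ) {d : ℕ} (hg : g.IsHomogeneous d)
    (x : Fin n → ℝ) (hx : ∀ i, x i ∈ Set.Icc (0:ℝ) 1) (hgx : 0 < eval x g) :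
    ∃ ρ : ℝ, 0 < ρ ∧ ∃ k₀ : ℕ, ∀ α : Fin n →₀ ℕ,
      k₀ ≤ ∑ i, α i → (∀ i, |(α i : ℝ)/((∑ i, α i : ℕ) : ℝ) - x i| ≤ 2*ρ) →
      0 ≤ T g α := by
  classical
  set c := eval x g with hcdef
  set M := ∑ β ∈ g.support, |g.coeff β| with hMdef
  have hM0 : 0 ≤ M := Finset.sum_nonneg fun _ _ => abs_nonneg _
  have hdegs : ∀ β ∈ g.support, (∑ i, β i) ≤ d := fun β hβ =>
    le_of_eq (support_deg_eq hg hβ)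
  set ρ : ℝ := c / (4 * (M * d + 1)) with hρdef
  have hden : (0:ℝ) < M * d + 1 := by positivity
  have hρ : 0 < ρ := by
    rw [hρdef]; positivity
  obtain ⟨k₁, hk₁⟩ := exists_nat_gt (4 * M * (d:ℝ)^2 / c)
  refine ⟨ρ, hρ, max (max d 1) k₁, fun α hα hdist => ?_⟩
  set t := ∑ i, α i with htdef
  have ht1 : 1 ≤ t := le_trans (le_trans (le_max_right d 1) (le_max_left _ _)) hα
  have htd : d ≤ t := le_trans (le_trans (le_max_left d 1) (le_max_left _ _)) hα
  have htk1 : k₁ ≤ t := le_trans (le_max_right _ _) hα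
  have ht0 : (0:ℝ) < t := by exact_mod_cast ht1
  have hαle : ∀ i, α i ≤ t := fun i => Finset.single_le_sum
    (f := fun i => α i) (fun _ _ => Nat.zero_le _) (Finset.mem_univ i)
  set u : Fin n → ℝ := fun i => (α i : ℝ)/t with hudef
  have hu01 : ∀ i, u i ∈ Set.Icc (0:ℝ) 1 := fun i =>
    ⟨div_nonneg (Nat.cast_nonneg _) (le_of_lt ht0),
     (div_le_one ht0).mpr (by exact_mod_cast hαle i)⟩
  have hLip := eval_lipschitz g d hdegs u x hu01 hx (2*ρ) hdist (by positivity)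
  have h2 : M * ((d:ℝ) * (2*ρ)) ≤ c/2 := by
    rw [hρdef]
    have key : M * ((d:ℝ) * (2 * (c / (4 * (M * (d:ℝ) + 1)))))
        = (c * (M*(d:ℝ))) / (2*(M*(d:ℝ)+1)) := by
      field_simp
      ring
    rw [key, div_le_div_iff₀ (by positivity) (by norm_num : (0:ℝ) < 2)]
    nlinarith [hgx, hM0, Nat.cast_nonneg (α := ℝ) d]
  have heval : c/2 ≤ eval u g := by
    have := abs_le.mp hLip
    linarith [this.1, this.2]
  have happrox := T_approx g hg α t htdef.symm ht1 htd
  have herr : M * ((d:ℝ)^2 / t) ≤ c/4 := by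
    have hgt : 4 * M * (d:ℝ)^2 / c < (t:ℝ) := lt_of_lt_of_le hk₁ (by exact_mod_cast htk1)
    rw [div_lt_iff₀ hgx] at hgt
    rw [mul_div_assoc'] at *
    rw [div_le_div_iff₀ ht0 (by norm_num : (0:ℝ) < 4)]
    nlinarith [hgt]
  have habs := abs_le.mp happrox
  have hTlow : (t:ℝ)^d * eval u g - M * ((d:ℝ)^2/t) * (t:ℝ)^d ≤ T g α := by
    linarith [habs.1]
  have hpow : (0:ℝ) < (t:ℝ)^d := by positivity
  have hc2 : (t:ℝ)^d * (c/2) ≤ (t:ℝ)^d * eval u g :=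
    mul_le_mul_of_nonneg_left heval (le_of_lt hpow)
  have herr2 : M * ((d:ℝ)^2/t) * (t:ℝ)^d ≤ (c/4) * (t:ℝ)^d :=
    mul_le_mul_of_nonneg_right herr (le_of_lt hpow)
  have hcpos : (0:ℝ) < c := hgx
  nlinarith [hpow, hcpos]


end PolyaLG

open PolyaLG in
theorem local_decomposition_polya (n : ℕ) (f : MvPolynomial (Fin n) ℝ)
    (hyp : ∀ x : Fin n → ℝ, (∀ i, 0 ≤ x i) → ∑ i, x i = 1 →
      ∃ (m : ℕ) (g h : Fin m → MvPolynomial (Fin n) ℝ),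
        (∀ i, ∃ d : ℕ, (g i).IsHomogeneous d) ∧
        (∀ i, ∀ α : Fin n →₀ ℕ, 0 ≤ (h i).coeff α) ∧
        f = ∑ i, g i * h i ∧
        (∀ i, 0 < eval x (g i))) :
    ∃ k : ℕ, ∀ α : Fin n →₀ ℕ,
      0 ≤ ((∑ i, X i : MvPolynomial (Fin n) ℝ)^k * f).coeff α := by
  classical
  have hyp' : ∀ x : {y : Fin n → ℝ // y ∈ stdSimplex ℝ (Fin n)},
      ∃ (m : ℕ) (g h : Fin m → MvPolynomial (Fin n) ℝ),
        (∀ i, ∃ d : ℕ, (g i).IsHomogeneous d) ∧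
        (∀ i, ∀ α : Fin n →₀ ℕ, 0 ≤ (h i).coeff α) ∧
        f = ∑ i, g i * h i ∧
        (∀ i, 0 < eval x.1 (g i)) := fun x => hyp x.1 x.2.1 x.2.2
  choose m G H hhom hHnn hdecomp hGpos using hyp'
  choose d hd using hhom
  have hx01 : ∀ (x : {y : Fin n → ℝ // y ∈ stdSimplex ℝ (Fin n)}) (i : Fin n),
      x.1 i ∈ Set.Icc (0:ℝ) 1 := by
    intro x i
    refine ⟨x.2.1 i, ?_⟩
    have h1 : x.1 i ≤ ∑ j, x.1 j := Finset.single_le_sum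
      (f := fun j => x.1 j) (fun j _ => x.2.1 j) (Finset.mem_univ i)
    rw [x.2.2] at h1
    exact h1
  choose ρ₀ hρ₀pos k₀ hT using fun x i =>
    T_pos (G x i) (hd x i) x.1 (hx01 x) (hGpos x i)
  have hρex : ∀ x, ∃ ρ : ℝ, 0 < ρ ∧ ∀ i, ρ ≤ ρ₀ x i := by
    intro x
    rcases isEmpty_or_nonempty (Fin (m x)) with he | hne
    · exact ⟨1, one_pos, fun i => isEmptyElim i⟩
    · refine ⟨min 1 (Finset.univ.inf' Finset.univ_nonempty (ρ₀ x)), ?_, ?_⟩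
      · refine lt_min one_pos ?_
        rw [Finset.lt_inf'_iff]
        exact fun i _ => hρ₀pos x i
      · exact fun i => le_trans (min_le_right _ _) (Finset.inf'_le _ (Finset.mem_univ i))
  choose ρ hρpos hρle using hρex
  obtain ⟨s, hs⟩ := (isCompact_stdSimplex ℝ (Fin n)).elim_finite_subcover
    (fun x => Metric.ball x.1 (ρ x)) (fun x => Metric.isOpen_ball)
    (fun w hw => Set.mem_iUnion.2 ⟨⟨w, hw⟩, Metric.mem_ball_self (hρpos _)⟩)
  set D : ℕ := s.sup (fun x => Finset.univ.sup fun i => (H x i).totalDegree) with hDdef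
  -- eventually good k
  have hev1 : ∀ x ∈ s, ∀ᶠ k : ℕ in Filter.atTop, 2*(D:ℝ)/(k:ℝ) ≤ ρ x := by
    intro x _
    have h0 : Filter.Tendsto (fun k : ℕ => 2*(D:ℝ)/(k:ℝ)) Filter.atTop (nhds 0) :=
      Filter.Tendsto.div_atTop tendsto_const_nhds tendsto_natCast_atTop_atTop
    exact Filter.Eventually.mono (h0.eventually_lt_const (hρpos x)) (fun k hk => le_of_lt hk)
  have hev : ∀ᶠ k : ℕ in Filter.atTop,
      1 ≤ k ∧ ∀ x ∈ s, (2*(D:ℝ)/(k:ℝ) ≤ ρ x ∧ ∀ i, k₀ x i ≤ k) := by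
    refine (Filter.eventually_ge_atTop 1).and ?_
    refine (Filter.eventually_all_finite s.finite_toSet).mpr (fun x hx => ?_)
    exact (hev1 x hx).and (Filter.eventually_all.mpr
      (fun i => Filter.eventually_ge_atTop (k₀ x i)))
  obtain ⟨k, hk1, hk2⟩ := hev.exists
  refine ⟨k, fun α => ?_⟩
  by_cases hlt : ∑ i, α i < k
  · rw [coeff_mul_eq_zero_of_lt f k α hlt]
  push_neg at hlt
  set t := ∑ i, α i with htdef
  have ht1 : 1 ≤ t := le_trans hk1 hlt
  have ht0 : (0:ℝ) < (t:ℝ) := by exact_mod_cast ht1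
  set w : Fin n → ℝ := fun i => (α i : ℝ)/(t:ℝ) with hwdef
  have hwmem : w ∈ stdSimplex ℝ (Fin n) := by
    constructor
    · exact fun i => div_nonneg (Nat.cast_nonneg _) (le_of_lt ht0)
    · rw [hwdef, ← Finset.sum_div]
      rw [div_eq_one_iff_eq (ne_of_gt ht0)]
      exact_mod_cast rfl
  have hcov := hs hwmem
  rw [Set.mem_iUnion₂] at hcov
  obtain ⟨x, hxs, hwx⟩ := hcov
  rw [hdecomp x, Finset.mul_sum, MvPolynomial.coeff_sum]
  refine Finset.sum_nonneg fun i _ => ?_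
  rw [← mul_assoc]
  have hexp : coeff α ((∑ j, X j : MvPolynomial (Fin n) ℝ)^k * G x i * H x i)
      = ∑ β ∈ (H x i).support,
          (if β ≤ α then coeff (α - β) ((∑ j, X j : MvPolynomial (Fin n) ℝ)^k * G x i)
            * (H x i).coeff β else 0) := by
    conv_lhs => rw [(H x i).as_sum, Finset.mul_sum, MvPolynomial.coeff_sum]
    exact Finset.sum_congr rfl fun β _ => coeff_mul_monomial' _ _ _ _
  rw [hexp]
  refine Finset.sum_nonneg fun β hβ => ?_
  split_ifs with hβα
  swap
  · exact le_refl 0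
  refine mul_nonneg ?_ (hHnn x i β)
  set γ := α - β with hγdef
  set t' := ∑ j, γ j with ht'def
  by_cases hhit : t' = k + d x i
  swap
  · rw [coeff_homog_zero (hd x i) k γ hhit]
  -- main positivity case
  have hkt' : k ≤ t' := by omega
  have hT'0 : (0:ℝ) < (t':ℝ) := by
    have : 1 ≤ t' := le_trans hk1 hkt'
    exact_mod_cast this
  have hγa : ∀ j, γ j = α j - β j := fun j => Finsupp.tsub_apply α β j
  have ht'le : t' ≤ t := Finset.sum_le_sum fun j _ => by rw [hγa j]; omega
  have htle : t ≤ t' + ∑ j, β j := by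
    rw [htdef, ht'def, ← Finset.sum_add_distrib]
    refine Finset.sum_le_sum fun j _ => ?_
    rw [hγa j]; omega
  have hβD : (∑ j, β j) ≤ D := by
    have h1 : β.sum (fun _ e => e) ≤ (H x i).totalDegree := le_totalDegree hβ
    have h2 : β.sum (fun _ e => e) = ∑ j, β j := by
      rw [Finsupp.sum]
      exact Finset.sum_subset (Finset.subset_univ _)
        (fun j _ hj => Finsupp.notMem_support_iff.1 hj)
    have h3 : (H x i).totalDegree ≤ Finset.univ.sup fun i' => (H x i').totalDegree :=
      Finset.le_sup (f := fun i' => (H x i').totalDegree) (Finset.mem_univ i)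
    have h4 : (Finset.univ.sup fun i' => (H x i').totalDegree) ≤ D :=
      Finset.le_sup (f := fun x' => Finset.univ.sup fun i' => (H x' i').totalDegree) hxs
    omega
  -- the distance estimate
  have hdist : ∀ l, |(γ l : ℝ)/((∑ j, γ j : ℕ):ℝ) - x.1 l| ≤ 2 * ρ₀ x i := by
    intro l
    rw [← ht'def]
    have hwl : |w l - x.1 l| ≤ ρ x := by
      rw [Metric.mem_ball] at hwx
      have h1 := dist_le_pi_dist w x.1 l
      rw [Real.dist_eq] at h1
      linarith
    have hαl : (α l : ℝ) ≤ (t:ℝ) := by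
      exact_mod_cast Finset.single_le_sum (f := fun j => α j)
        (fun j _ => Nat.zero_le _) (Finset.mem_univ l)
    have hβlD : (α l : ℝ) - (γ l : ℝ) ≤ (D:ℝ) := by
      have h5 : α l - γ l ≤ β l := by rw [hγa l]; omega
      have h6 : β l ≤ D := le_trans (Finset.single_le_sum (f := fun j => β j)
        (fun j _ => Nat.zero_le _) (Finset.mem_univ l)) hβD
      have h7 : γ l ≤ α l := by rw [hγa l]; omega
      have : α l - γ l ≤ D := le_trans h5 h6
      push_cast [← Nat.cast_sub h7]
      exact_mod_cast this
    have hTT' : (t:ℝ) - (t':ℝ) ≤ (D:ℝ) := by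
      have : t - t' ≤ D := by omega
      push_cast [← Nat.cast_sub ht'le]
      exact_mod_cast this
    have hγl : (γ l : ℝ) ≤ (α l : ℝ) := by
      have : γ l ≤ α l := by rw [hγa l]; omega
      exact_mod_cast this
    have hmain : |(γ l : ℝ)/(t':ℝ) - w l| ≤ 2*(D:ℝ)/(t':ℝ) := by
      have e1 : (γ l:ℝ)/(t':ℝ) - w l
          = ((γ l:ℝ) - (α l:ℝ))/(t':ℝ) + ((α l:ℝ)/(t':ℝ) - (α l:ℝ)/(t:ℝ)) := by
        rw [hwdef]; ring
      rw [e1]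
      refine le_trans (abs_add_le _ _) ?_
      have b1 : |((γ l:ℝ) - (α l:ℝ))/(t':ℝ)| ≤ (D:ℝ)/(t':ℝ) := by
        rw [abs_div, abs_of_pos hT'0]
        gcongr
        rw [abs_of_nonpos (by linarith)]
        linarith
      have hsub0 : (0:ℝ) ≤ (t:ℝ) - (t':ℝ) := by
        have : (t':ℝ) ≤ (t:ℝ) := by exact_mod_cast ht'le
        linarith
      have b2 : |(α l:ℝ)/(t':ℝ) - (α l:ℝ)/(t:ℝ)| ≤ (D:ℝ)/(t':ℝ) := by
        have e2 : (α l:ℝ)/(t':ℝ) - (α l:ℝ)/(t:ℝ)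
            = (α l:ℝ)*((t:ℝ) - (t':ℝ))/((t':ℝ)*(t:ℝ)) := by
          field_simp
        rw [e2, abs_div, abs_of_pos (mul_pos hT'0 ht0),
          abs_of_nonneg (mul_nonneg (Nat.cast_nonneg _) hsub0)]
        calc (α l:ℝ)*((t:ℝ)-(t':ℝ))/((t':ℝ)*(t:ℝ))
            ≤ (t:ℝ)*((t:ℝ)-(t':ℝ))/((t':ℝ)*(t:ℝ)) := by gcongr
          _ = ((t:ℝ)-(t':ℝ))/(t':ℝ) := by
              field_simp
          _ ≤ (D:ℝ)/(t':ℝ) := by gcongr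
      have hsplit : 2*(D:ℝ)/(t':ℝ) = (D:ℝ)/(t':ℝ) + (D:ℝ)/(t':ℝ) := by ring
      linarith
    have hchain : 2*(D:ℝ)/(t':ℝ) ≤ ρ x := by
      refine le_trans ?_ ((hk2 x hxs).1)
      have hk0' : (0:ℝ) < (k:ℝ) := by exact_mod_cast hk1
      exact div_le_div_of_nonneg_left (by positivity) hk0' (by exact_mod_cast hkt')
    calc |(γ l:ℝ)/(t':ℝ) - x.1 l|
        ≤ |(γ l:ℝ)/(t':ℝ) - w l| + |w l - x.1 l| := by
          have e : (γ l:ℝ)/(t':ℝ) - x.1 l = ((γ l:ℝ)/(t':ℝ) - w l) + (w l - x.1 l) := by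
            ring
          rw [e]
          exact abs_add_le _ _
      _ ≤ ρ x + ρ x := add_le_add (le_trans hmain hchain) hwl
      _ ≤ 2 * ρ₀ x i := by
          have := hρle x i
          linarith
  have hk0le : k₀ x i ≤ t' := le_trans ((hk2 x hxs).2 i) hkt'
  have hTnn : 0 ≤ T (G x i) γ := hT x i γ (by rw [ht'def] at hk0le; exact hk0le) hdist
  have hkey := key_coeff (G x i) (hd x i) k γ hhit
  have hfacpos : (0:ℝ) < ∏ l, ((γ l).factorial : ℝ) :=
    Finset.prod_pos (fun l _ => by exact_mod_cast (γ l).factorial_pos)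
  have hmul : 0 ≤ (∏ l, ((γ l).factorial:ℝ))
      * coeff γ ((∑ j, X j : MvPolynomial (Fin n) ℝ)^k * G x i) := by
    rw [hkey]
    exact mul_nonneg (Nat.cast_nonneg _) hTnn
  by_contra hneg
  push_neg at hneg
  nlinarith [hfacpos, hmul, hneg]
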